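/- With W as above, W is continuous on ℝ_{≥0}, satisfies σ_b² ≤ W(q) < a²/erf(a/√(2q)) + σ_b², and there exists q* > 0 with W(q*) = q*. -/

import Mathlib

open MeasureTheory ProbabilityTheory

noncomputable def erf (x : ℝ) : ℝ :=
  (2 / Real.sqrt Real.pi) * ∫ t in (0:ℝ)..x, Real.exp (-t ^ 2)

noncomputable def Wmap (φ φ' : ℝ → ℝ) (σb2 : ℝ) (q : ℝ) : ℝ :=
  (∫ z, (φ (Real.sqrt q * z)) ^ 2 ∂(gaussianReal 0 1)) /
    (∫ z, (φ' (Real.sqrt q * z)) ^ 2 ∂(gaussianReal 0 1)) + σb2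

namespace WAux

open Real
open scoped ENNReal NNReal

lemma qmp_mul {c : ℝ} (hc : c ≠ 0) :
    Measure.QuasiMeasurePreserving (fun z : ℝ => c * z) volume volume := by
  refine ⟨measurable_const_mul c, ?_⟩
  rw [show (fun z : ℝ => c * z) = (c * ·) from rfl, Real.map_volume_mul_left hc]
  exact Measure.smul_absolutelyContinuous

lemma ae_gaussian_comp {P : ℝ → Prop} (h : ∀ᵐ u ∂(volume : Measure ℝ), P u)
    {c : ℝ} (hc : c ≠ 0) : ∀ᵐ z ∂(gaussianReal 0 1), P (c * z) := by
  have habs : gaussianReal 0 1 ≪ (volume : Measure ℝ) :=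
    gaussianReal_absolutelyContinuous 0 one_ne_zero
  exact ((qmp_mul hc).ae h).filter_mono habs.ae_le

lemma gauss_open_pos {U : Set ℝ} (hU : IsOpen U) (hne : U.Nonempty) :
    0 < gaussianReal 0 1 U := by
  rw [pos_iff_ne_zero]
  intro h0
  have := (gaussianReal_absolutelyContinuous' 0 one_ne_zero) h0
  exact (hU.measure_pos volume hne).ne' this

lemma map_sqrt_gaussian {q : ℝ} (hq : 0 < q) :
    (gaussianReal 0 1).map (fun z => Real.sqrt q * z) = gaussianReal 0 q.toNNReal := by
  have h := gaussianReal_map_const_mul (μ := 0) (v := 1) (Real.sqrt q)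
  simp only [mul_zero] at h
  have hv : (⟨Real.sqrt q ^ 2, sq_nonneg _⟩ * 1 : NNReal) = q.toNNReal := by
    ext
    simp [Real.sq_sqrt hq.le, Real.coe_toNNReal _ hq.le]
    exact mul_one q
  rw [show (fun z : ℝ => Real.sqrt q * z) = (Real.sqrt q * ·) from rfl, h]
  exact congrArg _ hv

lemma integral_comp_sqrt_mul (g : ℝ → ℝ) (hg : Measurable g) {q : ℝ} (hq : 0 < q) :
    ∫ z, g (Real.sqrt q * z) ∂(gaussianReal 0 1)
      = ∫ u, gaussianPDFReal 0 q.toNNReal u * g u := by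
  have h1 : ∫ z, g (Real.sqrt q * z) ∂(gaussianReal 0 1)
      = ∫ u, g u ∂((gaussianReal 0 1).map (fun z => Real.sqrt q * z)) := by
    rw [integral_map (measurable_const_mul _).aemeasurable hg.aestronglyMeasurable]
  rw [h1, map_sqrt_gaussian hq,
    gaussianReal_of_var_ne_zero 0 (by simp [Real.toNNReal_eq_zero, hq, not_le] : q.toNNReal ≠ 0)]
  have h2 : (gaussianPDF 0 q.toNNReal)
      = fun u => ((gaussianPDFReal 0 q.toNNReal u).toNNReal : ℝ≥0∞) := rfl
  rw [h2, integral_withDensity_eq_integral_smul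
    ((measurable_gaussianPDFReal 0 q.toNNReal).real_toNNReal) g]
  congr 1
  ext u
  rw [NNReal.smul_def, Real.coe_toNNReal _ (gaussianPDFReal_nonneg _ _ _), smul_eq_mul]

lemma exp_neg_sq_intInt (u v : ℝ) :
    IntervalIntegrable (fun t => Real.exp (-t ^ 2)) volume u v :=
  (Real.continuous_exp.comp (by continuity)).intervalIntegrable u v

lemma erf_pos {x : ℝ} (hx : 0 < x) : 0 < erf x := by
  have h1 : 0 < ∫ t in (0:ℝ)..x, Real.exp (-t ^ 2) :=
    intervalIntegral.intervalIntegral_pos_of_pos (exp_neg_sq_intInt 0 x)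
      (fun t => Real.exp_pos _) hx
  have h2 : 0 < 2 / Real.sqrt π := by positivity
  exact mul_pos h2 h1

lemma erf_lower {x : ℝ} (h0 : 0 < x) (h1 : x ≤ 1) :
    2 / Real.sqrt π * (x * Real.exp (-1)) ≤ erf x := by
  have key : x * Real.exp (-1) ≤ ∫ t in (0:ℝ)..x, Real.exp (-t ^ 2) := by
    have : ∫ t in (0:ℝ)..x, Real.exp (-1 : ℝ) ≤ ∫ t in (0:ℝ)..x, Real.exp (-t ^ 2) := by
      apply intervalIntegral.integral_mono_on h0.le (intervalIntegrable_const)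
        (exp_neg_sq_intInt 0 x)
      intro t ht
      apply Real.exp_le_exp.mpr
      rcases ht with ⟨ht0, htx⟩
      nlinarith
    simpa using this
  have h2 : 0 ≤ 2 / Real.sqrt π := by positivity
  unfold erf
  nlinarith

lemma gauss_Ioo_erf {c : ℝ} (hc : 0 < c) :
    ((gaussianReal 0 1) (Set.Ioo (-c) c)).toReal = erf (c / Real.sqrt 2) := by
  have hpdf : ∀ x : ℝ, gaussianPDFReal 0 1 x = (Real.sqrt (2 * π))⁻¹ * Real.exp (-x ^ 2 / 2) := by
    intro x
    simp [gaussianPDFReal]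
  rw [gaussianReal_apply_eq_integral 0 one_ne_zero,
    ENNReal.toReal_ofReal (setIntegral_nonneg measurableSet_Ioo
      (fun x _ => gaussianPDFReal_nonneg 0 1 x))]
  have hIoo : ∫ x in Set.Ioo (-c) c, gaussianPDFReal 0 1 x
      = ∫ x in (-c)..c, gaussianPDFReal 0 1 x := by
    rw [intervalIntegral.integral_of_le (by linarith), integral_Ioc_eq_integral_Ioo]
  rw [hIoo]
  simp_rw [hpdf]
  rw [intervalIntegral.integral_const_mul]
  set y := c / Real.sqrt 2 with hy
  have h2 : Real.sqrt 2 ≠ 0 := by positivity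
  have hcy : Real.sqrt 2 * y = c := by rw [hy]; field_simp
  have hsub : ∫ x in (-c)..c, Real.exp (-x ^ 2 / 2)
      = Real.sqrt 2 * ∫ t in (-y)..y, Real.exp (-t ^ 2) := by
    have h4 := intervalIntegral.integral_comp_mul_left (a := -y) (b := y)
      (fun x => Real.exp (-x ^ 2 / 2)) h2
    have heq : ∀ t : ℝ, Real.exp (-(Real.sqrt 2 * t) ^ 2 / 2) = Real.exp (-t ^ 2) := by
      intro t
      rw [mul_pow, Real.sq_sqrt (by norm_num : (2:ℝ) ≥ 0)]
      ring_nf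
    simp_rw [heq] at h4
    rw [mul_neg, hcy] at h4
    rw [h4, smul_eq_mul, ← mul_assoc, mul_inv_cancel₀ h2, one_mul]
  have hsplit : ∫ t in (-y)..y, Real.exp (-t ^ 2)
      = 2 * ∫ t in (0:ℝ)..y, Real.exp (-t ^ 2) := by
    have hadd := intervalIntegral.integral_add_adjacent_intervals (a := -y) (b := 0) (c := y)
      (exp_neg_sq_intInt _ _) (exp_neg_sq_intInt _ _)
    have hneg : ∫ t in (-y)..(0:ℝ), Real.exp (-t ^ 2)
        = ∫ t in (0:ℝ)..y, Real.exp (-t ^ 2) := by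
      have h3 := intervalIntegral.integral_comp_neg (a := (0:ℝ)) (b := y)
        (fun t => Real.exp (-t ^ 2))
      rw [neg_zero] at h3
      rw [← h3]
      apply intervalIntegral.integral_congr
      intro t _
      simp [neg_pow]
    rw [← hadd, hneg]
    ring
  rw [hsub, hsplit, erf]
  rw [Real.sqrt_mul (by norm_num : (0:ℝ) ≤ 2) π]
  have hπ : Real.sqrt π ≠ 0 := by positivity
  field_simp

lemma pdf_contAt {u : ℝ} {q₀ : ℝ} (hq : 0 < q₀) :
    ContinuousAt (fun q : ℝ => gaussianPDFReal 0 q.toNNReal u) q₀ := by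
  have hfun : (fun q : ℝ => gaussianPDFReal 0 q.toNNReal u)
      = fun q : ℝ => (Real.sqrt (2 * π * max q 0))⁻¹ * Real.exp (-(u - 0) ^ 2 / (2 * max q 0)) := by
    funext q
    rw [gaussianPDFReal, Real.coe_toNNReal']
  rw [hfun]
  have hm : Continuous fun q : ℝ => max q 0 := continuous_id.max continuous_const
  have hmq : max q₀ 0 = q₀ := max_eq_left hq.le
  apply ContinuousAt.mul
  · apply ContinuousAt.inv₀
    · exact (Real.continuous_sqrt.comp (continuous_const.mul hm)).continuousAt
    · rw [hmq]
      positivity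
  · apply Real.continuous_exp.continuousAt.comp
    apply ContinuousAt.div continuousAt_const (continuous_const.mul hm).continuousAt
    simp only [Pi.mul_apply, hmq]
    positivity

section Phi

variable {φ φ' : ℝ → ℝ} {a k : ℝ} (ha : 0 < a) (hk : 0 < k)
  (hcont : Continuous φ)
  (hlin : ∀ z, |z| ≤ a → φ z = k * z)
  (hbdd : ∀ z, |φ z| ≤ a * k)
  (hmeas : Measurable φ')
  (hderiv_lin : ∀ z, |z| < a → φ' z = k)
  (hderiv_bdd : ∀ᵐ z ∂(volume : Measure ℝ), |φ' z| ≤ k)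

include hbdd in
lemma sq_phi_le : ∀ w : ℝ, φ w ^ 2 ≤ a ^ 2 * k ^ 2 := by
  intro w
  have h := hbdd w
  have h2 : φ w ^ 2 = |φ w| ^ 2 := (sq_abs _).symm
  nlinarith [abs_nonneg (φ w)]

include hcont hbdd in
lemma N_integrable (q : ℝ) :
    Integrable (fun z => φ (Real.sqrt q * z) ^ 2) (gaussianReal 0 1) := by
  refine Integrable.mono' (integrable_const (a ^ 2 * k ^ 2))
    ((hcont.comp (continuous_const.mul continuous_id)).pow 2).aestronglyMeasurable
    (ae_of_all _ fun z => ?_)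
  rw [Real.norm_eq_abs, abs_of_nonneg (sq_nonneg _)]
  exact sq_phi_le hbdd _

omit hmeas in
include hk hderiv_bdd in
lemma D_ae_bound {q : ℝ} (hq : 0 < q) :
    ∀ᵐ z ∂(gaussianReal 0 1), ‖φ' (Real.sqrt q * z) ^ 2‖ ≤ k ^ 2 := by
  have h := ae_gaussian_comp (P := fun u => |φ' u| ≤ k) hderiv_bdd
    (c := Real.sqrt q) (by positivity)
  filter_upwards [h] with z hz
  rw [Real.norm_eq_abs, abs_of_nonneg (sq_nonneg _), ← sq_abs]
  nlinarith [abs_nonneg (φ' (Real.sqrt q * z))]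

include hk hmeas hderiv_bdd in
lemma D_integrable {q : ℝ} (hq : 0 < q) :
    Integrable (fun z => φ' (Real.sqrt q * z) ^ 2) (gaussianReal 0 1) :=
  Integrable.mono' (integrable_const (k ^ 2))
    (((hmeas.comp (measurable_const_mul _)).pow_const 2).aestronglyMeasurable)
    (D_ae_bound hk hderiv_bdd hq)

include ha hk hcont hlin hbdd in
lemma N_lt (q : ℝ) :
    ∫ z, φ (Real.sqrt q * z) ^ 2 ∂(gaussianReal 0 1) < a ^ 2 * k ^ 2 := by
  set f : ℝ → ℝ := fun z => a ^ 2 * k ^ 2 - φ (Real.sqrt q * z) ^ 2 with hf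
  have hfc : Continuous f := by
    apply continuous_const.sub
    exact (hcont.comp (continuous_const.mul continuous_id)).pow 2
  have hfnn : ∀ z, 0 ≤ f z := fun z => by
    have := sq_phi_le hbdd (Real.sqrt q * z)
    simp [hf]; linarith
  have hfint : Integrable f (gaussianReal 0 1) :=
    (integrable_const _).sub (N_integrable hcont hbdd q)
  have hpos : 0 < ∫ z, f z ∂(gaussianReal 0 1) := by
    rw [integral_pos_iff_support_of_nonneg_ae (ae_of_all _ hfnn) hfint]
    have hU : IsOpen (f ⁻¹' Set.Ioi 0) := hfc.isOpen_preimage _ isOpen_Ioi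
    have h0 : (0:ℝ) ∈ f ⁻¹' Set.Ioi 0 := by
      have hφ0 : φ 0 = 0 := by
        have := hlin 0 (by simp [ha.le])
        simpa using this
      simp only [Set.mem_preimage, Set.mem_Ioi, hf, mul_zero, hφ0]
      norm_num
      positivity
    calc (0:ℝ≥0∞) < gaussianReal 0 1 (f ⁻¹' Set.Ioi 0) :=
          gauss_open_pos hU ⟨0, h0⟩
      _ ≤ gaussianReal 0 1 (Function.support f) := by
          apply measure_mono
          intro z hz
          exact ne_of_gt hz
  have hsplit : ∫ z, f z ∂(gaussianReal 0 1)
      = a ^ 2 * k ^ 2 - ∫ z, φ (Real.sqrt q * z) ^ 2 ∂(gaussianReal 0 1) := by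
    rw [hf]
    rw [integral_sub (integrable_const _) (N_integrable hcont hbdd q), integral_const]
    simp
  linarith [hsplit ▸ hpos]

include ha hk hmeas hderiv_lin hderiv_bdd in
lemma D_ge {q : ℝ} (hq : 0 < q) :
    k ^ 2 * ((gaussianReal 0 1) (Set.Ioo (-(a / Real.sqrt q)) (a / Real.sqrt q))).toReal
      ≤ ∫ z, φ' (Real.sqrt q * z) ^ 2 ∂(gaussianReal 0 1) := by
  set c := a / Real.sqrt q with hc
  have hsq : 0 < Real.sqrt q := Real.sqrt_pos.mpr hq
  have hcpos : 0 < c := by positivity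
  set s : Set ℝ := Set.Ioo (-c) c with hs
  have hmeas_s : MeasurableSet s := measurableSet_Ioo
  have heq : ∀ z ∈ s, φ' (Real.sqrt q * z) ^ 2 = k ^ 2 := by
    intro z hz
    have habs : |z| < c := abs_lt.mpr ⟨hz.1, hz.2⟩
    have : |Real.sqrt q * z| < a := by
      rw [abs_mul, abs_of_pos hsq]
      calc Real.sqrt q * |z| < Real.sqrt q * c := mul_lt_mul_of_pos_left habs hsq
        _ = a := by rw [hc]; field_simp
    rw [hderiv_lin _ this]
  calc k ^ 2 * ((gaussianReal 0 1) s).toReal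
      = ∫ z in s, φ' (Real.sqrt q * z) ^ 2 ∂(gaussianReal 0 1) := by
        rw [setIntegral_congr_fun hmeas_s heq, setIntegral_const, smul_eq_mul, mul_comm]; rfl
    _ ≤ ∫ z, φ' (Real.sqrt q * z) ^ 2 ∂(gaussianReal 0 1) := by
        apply setIntegral_le_integral (D_integrable hk hmeas hderiv_bdd hq)
        exact ae_of_all _ fun z => sq_nonneg _

omit hk in
include ha hderiv_lin in
lemma D_zero : ∫ z, φ' (Real.sqrt 0 * z) ^ 2 ∂(gaussianReal 0 1) = k ^ 2 := by
  have h0 : φ' 0 = k := hderiv_lin 0 (by simpa using ha)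
  simp [Real.sqrt_zero, h0]

include ha hk hmeas hderiv_lin hderiv_bdd in
lemma D_pos {q : ℝ} (hq : 0 < q) :
    0 < ∫ z, φ' (Real.sqrt q * z) ^ 2 ∂(gaussianReal 0 1) := by
  have hsq : 0 < Real.sqrt q := Real.sqrt_pos.mpr hq
  have hcpos : 0 < a / Real.sqrt q := by positivity
  have h1 : 0 < gaussianReal 0 1 (Set.Ioo (-(a / Real.sqrt q)) (a / Real.sqrt q)) :=
    gauss_open_pos isOpen_Ioo ⟨0, by constructor <;> [linarith; exact hcpos]⟩
  have h2 : 0 < ((gaussianReal 0 1) (Set.Ioo (-(a / Real.sqrt q)) (a / Real.sqrt q))).toReal :=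
    ENNReal.toReal_pos h1.ne' (measure_ne_top _ _)
  calc (0:ℝ) < k ^ 2 * _ := mul_pos (by positivity) h2
    _ ≤ _ := D_ge ha hk hmeas hderiv_lin hderiv_bdd hq

include hcont hbdd in
lemma N_continuous :
    Continuous (fun q => ∫ z, φ (Real.sqrt q * z) ^ 2 ∂(gaussianReal 0 1)) := by
  apply continuous_of_dominated (bound := fun _ => a ^ 2 * k ^ 2)
  · intro q
    exact ((hcont.comp (continuous_const.mul continuous_id)).pow 2).aestronglyMeasurable
  · intro q
    refine ae_of_all _ fun z => ?_
    rw [Real.norm_eq_abs, abs_of_nonneg (sq_nonneg _)]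
    exact sq_phi_le hbdd _
  · exact integrable_const _
  · refine ae_of_all _ fun z => ?_
    exact (hcont.comp (Real.continuous_sqrt.mul continuous_const)).pow 2

include hk hmeas hderiv_bdd in
lemma D_continuousAt {q₀ : ℝ} (hq : 0 < q₀) :
    ContinuousAt (fun q => ∫ z, φ' (Real.sqrt q * z) ^ 2 ∂(gaussianReal 0 1)) q₀ := by
  set g : ℝ → ℝ := fun u => φ' u ^ 2 with hg
  have hgmeas : Measurable g := hmeas.pow_const 2
  have hgbd : ∀ᵐ u ∂(volume : Measure ℝ), |g u| ≤ k ^ 2 := by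
    filter_upwards [hderiv_bdd] with u hu
    rw [hg]
    simp only
    rw [abs_of_nonneg (sq_nonneg _), ← sq_abs]
    nlinarith [abs_nonneg (φ' u)]
  have hev : (fun q => ∫ z, φ' (Real.sqrt q * z) ^ 2 ∂(gaussianReal 0 1))
      =ᶠ[nhds q₀] (fun q => ∫ u, gaussianPDFReal 0 q.toNNReal u * g u) := by
    filter_upwards [isOpen_Ioi.mem_nhds hq] with q hq'
    exact integral_comp_sqrt_mul g hgmeas hq'
  rw [continuousAt_congr hev]
  apply continuousAt_of_dominated
    (bound := fun u => k ^ 2 * ((Real.sqrt (π * q₀))⁻¹ * Real.exp (-(1 / (4 * q₀)) * u ^ 2)))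
  · exact Filter.Eventually.of_forall fun q =>
      ((measurable_gaussianPDFReal _ _).mul hgmeas).aestronglyMeasurable
  · have hIoo : Set.Ioo (q₀ / 2) (2 * q₀) ∈ nhds q₀ :=
      isOpen_Ioo.mem_nhds ⟨by linarith, by linarith⟩
    filter_upwards [hIoo] with q hq'
    filter_upwards [hgbd] with u hu
    have hqpos : 0 < q := by have := hq'.1; linarith
    have hmq : ((q.toNNReal : ℝ)) = q := Real.coe_toNNReal _ hqpos.le
    have hpdf : gaussianPDFReal 0 q.toNNReal u
        ≤ (Real.sqrt (π * q₀))⁻¹ * Real.exp (-(1 / (4 * q₀)) * u ^ 2) := by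
      rw [gaussianPDFReal, hmq]
      have h1 : (Real.sqrt (2 * π * q))⁻¹ ≤ (Real.sqrt (π * q₀))⁻¹ := by
        apply inv_anti₀ (by positivity)
        apply Real.sqrt_le_sqrt
        nlinarith [hq'.1, Real.pi_pos]
      have h2 : Real.exp (-(u - 0) ^ 2 / (2 * q)) ≤ Real.exp (-(1 / (4 * q₀)) * u ^ 2) := by
        apply Real.exp_le_exp.mpr
        rw [sub_zero, neg_div, one_div, neg_mul, neg_le_neg_iff, inv_mul_eq_div]
        apply div_le_div_of_nonneg_left (sq_nonneg u) (by linarith [hq'.1]) (by linarith [hq'.2])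
      exact mul_le_mul h1 h2 (Real.exp_pos _).le (by positivity)
    rw [Real.norm_eq_abs, abs_mul, abs_of_nonneg (gaussianPDFReal_nonneg _ _ _)]
    calc gaussianPDFReal 0 q.toNNReal u * |g u|
        ≤ ((Real.sqrt (π * q₀))⁻¹ * Real.exp (-(1 / (4 * q₀)) * u ^ 2)) * k ^ 2 := by
          apply mul_le_mul hpdf hu (abs_nonneg _) (by positivity)
      _ = k ^ 2 * ((Real.sqrt (π * q₀))⁻¹ * Real.exp (-(1 / (4 * q₀)) * u ^ 2)) := by ring
  · exact ((integrable_exp_neg_mul_sq (show (0:ℝ) < 1 / (4 * q₀) by positivity)).const_mul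
      ((Real.sqrt (π * q₀))⁻¹)).const_mul (k ^ 2)
  · exact ae_of_all _ fun u => (pdf_contAt hq).mul continuousAt_const

omit hmeas in
include ha hk hderiv_lin hderiv_bdd in
lemma D_cwa_zero (hmeas : Measurable φ') :
    ContinuousWithinAt (fun q => ∫ z, φ' (Real.sqrt q * z) ^ 2 ∂(gaussianReal 0 1))
      (Set.Ici 0) 0 := by
  have hval : ∫ z, φ' (Real.sqrt 0 * z) ^ 2 ∂(gaussianReal 0 1) = k ^ 2 :=
    D_zero ha hderiv_lin
  rw [ContinuousWithinAt, hval]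
  have htend : Filter.Tendsto (fun q => ∫ z, φ' (Real.sqrt q * z) ^ 2 ∂(gaussianReal 0 1))
      (nhdsWithin 0 (Set.Ici 0)) (nhds (∫ _z, (k:ℝ) ^ 2 ∂(gaussianReal 0 1))) := by
    apply tendsto_integral_filter_of_dominated_convergence (bound := fun _ => k ^ 2)
    · exact Filter.Eventually.of_forall fun q =>
        ((hmeas.comp (measurable_const_mul _)).pow_const 2).aestronglyMeasurable
    · filter_upwards [self_mem_nhdsWithin] with q hq
      rcases eq_or_lt_of_le (Set.mem_Ici.mp hq : (0:ℝ) ≤ q) with h | h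
      · refine ae_of_all _ fun z => ?_
        rw [← h, Real.sqrt_zero, zero_mul, hderiv_lin 0 (by simpa using ha),
          Real.norm_eq_abs, abs_of_nonneg (sq_nonneg _)]
      · exact D_ae_bound hk hderiv_bdd h
    · exact integrable_const _
    · refine ae_of_all _ fun z => ?_
      have hev : ∀ᶠ q in nhdsWithin 0 (Set.Ici 0), φ' (Real.sqrt q * z) ^ 2 = k ^ 2 := by
        have hδ : (0:ℝ) < (a / (|z| + 1)) ^ 2 := by positivity
        filter_upwards [Ico_mem_nhdsGE
          hδ] with q hq
        have hq0 : 0 ≤ q := hq.1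
        have hlt : Real.sqrt q < a / (|z| + 1) := by
          have := Real.sqrt_lt_sqrt hq0 hq.2
          rwa [Real.sqrt_sq (by positivity)] at this
        have habs : |Real.sqrt q * z| < a := by
          rw [abs_mul, abs_of_nonneg (Real.sqrt_nonneg q)]
          have h1 : Real.sqrt q * |z| ≤ Real.sqrt q * (|z| + 1) :=
            mul_le_mul_of_nonneg_left (by linarith) (Real.sqrt_nonneg q)
          have h2 : Real.sqrt q * (|z| + 1) < a := by
            rw [← lt_div_iff₀ (by positivity : (0:ℝ) < |z| + 1)] at *
            exact hlt
          linarith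
        rw [hderiv_lin _ habs]
      exact Filter.Tendsto.congr' (Filter.EventuallyEq.symm hev) tendsto_const_nhds
  simpa using htend

end Phi

end WAux

theorem W_continuous_bounded_fixed_point (φ φ' : ℝ → ℝ) (a k σb2 : ℝ)
    (ha : 0 < a) (hk : 0 < k) (hσb : 0 < σb2)
    (hcont : Continuous φ)
    (hodd : ∀ z, φ (-z) = -φ z)
    (hlin : ∀ z, |z| ≤ a → φ z = k * z)
    (hbdd : ∀ z, |φ z| ≤ a * k)
    (hmeas : Measurable φ')
    (hderiv_lin : ∀ z, |z| < a → φ' z = k)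
    (hderiv : ∀ᵐ z ∂(volume : Measure ℝ), HasDerivAt φ (φ' z) z)
    (hderiv_bdd : ∀ᵐ z ∂(volume : Measure ℝ), |φ' z| ≤ k) :
    ContinuousOn (Wmap φ φ' σb2) (Set.Ici 0) ∧
    (∀ q : ℝ, 0 ≤ q → σb2 ≤ Wmap φ φ' σb2 q) ∧
    (∀ q : ℝ, 0 < q →
      Wmap φ φ' σb2 q < a ^ 2 / erf (a / Real.sqrt (2 * q)) + σb2) ∧
    ∃ qs : ℝ, 0 < qs ∧ Wmap φ φ' σb2 qs = qs := by
  have hW : Wmap φ φ' σb2 = fun q =>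
      (∫ z, (φ (Real.sqrt q * z)) ^ 2 ∂(gaussianReal 0 1)) /
        (∫ z, (φ' (Real.sqrt q * z)) ^ 2 ∂(gaussianReal 0 1)) + σb2 := rfl
  -- Part 1: continuity
  have hWcont : ContinuousOn (Wmap φ φ' σb2) (Set.Ici 0) := by
    rw [hW]
    intro q hq
    have hN := (WAux.N_continuous hcont hbdd).continuousWithinAt
      (s := Set.Ici (0:ℝ)) (x := q)
    have hD : ContinuousWithinAt
        (fun q => ∫ z, φ' (Real.sqrt q * z) ^ 2 ∂(gaussianReal 0 1)) (Set.Ici 0) q := by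
      rcases eq_or_lt_of_le (Set.mem_Ici.mp hq : (0:ℝ) ≤ q) with h | h
      · rw [← h]
        exact WAux.D_cwa_zero ha hk hderiv_lin hderiv_bdd hmeas
      · exact (WAux.D_continuousAt hk hmeas hderiv_bdd h).continuousWithinAt
    have hDne : (∫ z, φ' (Real.sqrt q * z) ^ 2 ∂(gaussianReal 0 1)) ≠ 0 := by
      rcases eq_or_lt_of_le (Set.mem_Ici.mp hq : (0:ℝ) ≤ q) with h | h
      · rw [← h, WAux.D_zero ha hderiv_lin]
        positivity
      · exact (WAux.D_pos ha hk hmeas hderiv_lin hderiv_bdd h).ne'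
    exact (hN.div hD hDne).add continuousWithinAt_const
  -- Part 2: lower bound
  have hlb : ∀ q : ℝ, 0 ≤ q → σb2 ≤ Wmap φ φ' σb2 q := by
    intro q _
    rw [hW]
    have h0 : 0 ≤ (∫ z, (φ (Real.sqrt q * z)) ^ 2 ∂(gaussianReal 0 1)) /
        (∫ z, (φ' (Real.sqrt q * z)) ^ 2 ∂(gaussianReal 0 1)) :=
      div_nonneg (integral_nonneg fun z => sq_nonneg _) (integral_nonneg fun z => sq_nonneg _)
    simp only
    linarith
  -- Part 3: strict upper bound
  have hub : ∀ q : ℝ, 0 < q →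
      Wmap φ φ' σb2 q < a ^ 2 / erf (a / Real.sqrt (2 * q)) + σb2 := by
    intro q hq
    have hsq : 0 < Real.sqrt q := Real.sqrt_pos.mpr hq
    set c := a / Real.sqrt q with hcdef
    have hc : 0 < c := by positivity
    have hcc : c / Real.sqrt 2 = a / Real.sqrt (2 * q) := by
      rw [hcdef, div_div, Real.sqrt_mul (by norm_num : (0:ℝ) ≤ 2) q, mul_comm]
    have hE : ((gaussianReal 0 1) (Set.Ioo (-c) c)).toReal = erf (a / Real.sqrt (2 * q)) := by
      rw [WAux.gauss_Ioo_erf hc, hcc]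
    have hEpos : 0 < erf (a / Real.sqrt (2 * q)) :=
      WAux.erf_pos (by positivity)
    set E := erf (a / Real.sqrt (2 * q)) with hEdef
    have hD : k ^ 2 * E ≤ ∫ z, φ' (Real.sqrt q * z) ^ 2 ∂(gaussianReal 0 1) := by
      rw [← hE]
      exact WAux.D_ge ha hk hmeas hderiv_lin hderiv_bdd hq
    have hDpos : 0 < ∫ z, φ' (Real.sqrt q * z) ^ 2 ∂(gaussianReal 0 1) :=
      lt_of_lt_of_le (by positivity) hD
    have hN : ∫ z, φ (Real.sqrt q * z) ^ 2 ∂(gaussianReal 0 1) < a ^ 2 * k ^ 2 :=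
      WAux.N_lt ha hk hcont hlin hbdd q
    have hkey : (∫ z, φ (Real.sqrt q * z) ^ 2 ∂(gaussianReal 0 1)) /
        (∫ z, φ' (Real.sqrt q * z) ^ 2 ∂(gaussianReal 0 1)) < a ^ 2 / E := by
      rw [div_lt_div_iff₀ hDpos hEpos]
      calc (∫ z, φ (Real.sqrt q * z) ^ 2 ∂(gaussianReal 0 1)) * E
          < (a ^ 2 * k ^ 2) * E := mul_lt_mul_of_pos_right hN hEpos
        _ = a ^ 2 * (k ^ 2 * E) := by ring
        _ ≤ a ^ 2 * ∫ z, φ' (Real.sqrt q * z) ^ 2 ∂(gaussianReal 0 1) :=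
            mul_le_mul_of_nonneg_left hD (by positivity)
    rw [hW]
    simp only
    linarith
  refine ⟨hWcont, hlb, hub, ?_⟩
  -- Part 4: fixed point
  set K := a * Real.sqrt Real.pi * Real.exp 1 * Real.sqrt 2 with hKdef
  have hKpos : 0 < K := by positivity
  set M := max (a ^ 2 / 2) ((K + σb2 + 1) ^ 2) with hMdef
  have hM1 : (K + σb2 + 1) ^ 2 ≤ M := le_max_right _ _
  have hMa : a ^ 2 / 2 ≤ M := le_max_left _ _
  have hMpos : 0 < M := lt_of_lt_of_le (by positivity) hM1
  have hsqrtM : K + σb2 + 1 ≤ Real.sqrt M := by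
    rw [show K + σb2 + 1 = Real.sqrt ((K + σb2 + 1) ^ 2) from
      (Real.sqrt_sq (by positivity)).symm]
    exact Real.sqrt_le_sqrt hM1
  have hsM1 : 1 ≤ Real.sqrt M := by linarith
  set x := a / Real.sqrt (2 * M) with hxdef
  have h2M : (0:ℝ) < 2 * M := by linarith
  have hs2M : 0 < Real.sqrt (2 * M) := Real.sqrt_pos.mpr h2M
  have hxpos : 0 < x := by positivity
  have hx1 : x ≤ 1 := by
    rw [hxdef, div_le_one hs2M]
    calc a = Real.sqrt (a ^ 2) := (Real.sqrt_sq ha.le).symm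
      _ ≤ Real.sqrt (2 * M) := Real.sqrt_le_sqrt (by linarith)
  have hlow := WAux.erf_lower hxpos hx1
  have hEx : 0 < erf x := WAux.erf_pos hxpos
  have hlowpos : 0 < 2 / Real.sqrt Real.pi * (x * Real.exp (-1)) := by positivity
  have hchain : a ^ 2 / erf x + σb2 ≤ M := by
    have h1 : a ^ 2 / erf x ≤ a ^ 2 / (2 / Real.sqrt Real.pi * (x * Real.exp (-1))) :=
      div_le_div_of_nonneg_left (sq_nonneg a) hlowpos hlow
    have h2 : a ^ 2 / (2 / Real.sqrt Real.pi * (x * Real.exp (-1))) = K / 2 * Real.sqrt M := by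
      rw [hxdef, hKdef, Real.sqrt_mul (by norm_num : (0:ℝ) ≤ 2) M, Real.exp_neg]
      have hπ : (0:ℝ) < Real.sqrt Real.pi := by positivity
      have hsM : (0:ℝ) < Real.sqrt M := by linarith
      have he : (0:ℝ) < Real.exp 1 := Real.exp_pos 1
      field_simp
    have h3 : K / 2 * Real.sqrt M + σb2 ≤ M := by
      have hMs : M = Real.sqrt M * Real.sqrt M := (Real.mul_self_sqrt hMpos.le).symm
      nlinarith [Real.sqrt_nonneg M, hsqrtM, hsM1, hKpos, hσb]
    linarith
  have hWM : Wmap φ φ' σb2 M < M := by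
    have := hub M hMpos
    rw [← hxdef] at this
    linarith
  -- IVT
  have hg : ContinuousOn (fun q => Wmap φ φ' σb2 q - q) (Set.Icc 0 M) :=
    (hWcont.mono (Set.Icc_subset_Ici_self)).sub continuousOn_id
  have hIVT := intermediate_value_Icc' hMpos.le hg
  have hmem : (0:ℝ) ∈ Set.Icc ((fun q => Wmap φ φ' σb2 q - q) M)
      ((fun q => Wmap φ φ' σb2 q - q) 0) := by
    constructor
    · simp only
      linarith
    · simp only
      have := hlb 0 le_rfl
      linarith
  obtain ⟨qs, hqs_mem, hqs_eq⟩ := hIVT hmem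
  have hqs' : Wmap φ φ' σb2 qs - qs = 0 := hqs_eq
  refine ⟨qs, ?_, by linarith⟩
  have hq0 : 0 ≤ qs := hqs_mem.1
  have hlbq := hlb qs hq0
  linarith
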